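/- Let α, β₁, β₂ be real numbers and σ > 0. The quadratic polynomial (λ − 1)² + (β₁ + β₂)σ²(λ − 1) + (α²σ² + β₁β₂σ⁴) is Schur stable if and only if |(β₁ + β₂)σ² − 2| < 1 + (1 − β₁σ²)(1 − β₂σ²) + α²σ² and (1 − β₁σ²)(1 − β₂σ²) + α²σ² < 1. (This polynomial is the characteristic polynomial of generalized Jacobi extra-gradient on a bilinear game, per singular value σ; hence Jacobi EG converges linearly iff these conditions hold for all singular values σ of E.) -/

import Mathlib

lemma schur_quadratic (b c : ℝ) :
    (∀ z : ℂ, z ^ 2 + (b : ℂ) * z + (c : ℂ) = 0 → ‖z‖ < 1) ↔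
      (|b| < 1 + c ∧ c < 1) := by
  constructor
  · intro h
    rcases le_or_gt 0 (b ^ 2 - 4 * c) with hd | hd
    · -- real roots
      set s := Real.sqrt (b ^ 2 - 4 * c) with hs
      have hs2 : s ^ 2 = b ^ 2 - 4 * c := Real.sq_sqrt hd
      set x₁ := (-b + s) / 2 with hx1
      set x₂ := (-b - s) / 2 with hx2
      have hr1 : x₁ ^ 2 + b * x₁ + c = 0 := by rw [hx1]; nlinarith [hs2]
      have hr2 : x₂ ^ 2 + b * x₂ + c = 0 := by rw [hx2]; nlinarith [hs2]
      have h1 : |x₁| < 1 := by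
        have := h (x₁ : ℂ) (by
          have : ((x₁ ^ 2 + b * x₁ + c : ℝ) : ℂ) = 0 := by rw [hr1]; norm_num
          push_cast at this ⊢; linear_combination this)
        rwa [Complex.norm_real, Real.norm_eq_abs] at this
      have h2 : |x₂| < 1 := by
        have := h (x₂ : ℂ) (by
          have : ((x₂ ^ 2 + b * x₂ + c : ℝ) : ℂ) = 0 := by rw [hr2]; norm_num
          push_cast at this ⊢; linear_combination this)
        rwa [Complex.norm_real, Real.norm_eq_abs] at this
      rw [abs_lt] at h1 h2
      have hc : c = x₁ * x₂ := by rw [hx1, hx2]; nlinarith [hs2]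
      have hb : b = -(x₁ + x₂) := by rw [hx1, hx2]; ring
      constructor
      · rw [abs_lt]
        constructor <;> nlinarith [mul_pos (by linarith : (0:ℝ) < 1 - x₁) (by linarith : (0:ℝ) < 1 - x₂), mul_pos (by linarith : (0:ℝ) < 1 + x₁) (by linarith : (0:ℝ) < 1 + x₂)]
      · nlinarith [mul_pos (by linarith : (0:ℝ) < 1 - x₁) (by linarith : (0:ℝ) < 1 - x₂), mul_pos (by linarith : (0:ℝ) < 1 + x₁) (by linarith : (0:ℝ) < 1 + x₂)]
    · -- complex conjugate roots
      set t := Real.sqrt (4 * c - b ^ 2) with ht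
      have ht2 : t ^ 2 = 4 * c - b ^ 2 := Real.sq_sqrt (by linarith)
      set z : ℂ := ((-b / 2 : ℝ) : ℂ) + ((t / 2 : ℝ) : ℂ) * Complex.I with hz
      have hroot : z ^ 2 + (b : ℂ) * z + (c : ℂ) = 0 := by
        rw [hz]
        have hI : Complex.I ^ 2 = -1 := Complex.I_sq
        have : (((-b/2:ℝ):ℂ) + ((t/2:ℝ):ℂ) * Complex.I) ^ 2 + (b:ℂ) * (((-b/2:ℝ):ℂ) + ((t/2:ℝ):ℂ) * Complex.I) + (c:ℂ)
            = (((-b/2)^2 - (t/2)^2 + b * (-b/2) + c : ℝ) : ℂ) + (((2 * (-b/2) * (t/2) + b * (t/2) : ℝ)) : ℂ) * Complex.I := by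
          push_cast
          linear_combination ((t:ℂ)/2)^2 * hI
        rw [this]
        have e1 : ((-b/2)^2 - (t/2)^2 + b * (-b/2) + c : ℝ) = 0 := by nlinarith [ht2]
        have e2 : (2 * (-b/2) * (t/2) + b * (t/2) : ℝ) = 0 := by ring
        rw [e1, e2]; norm_num
      have habs := h z hroot
      have hzsq : (‖z‖) ^ 2 = c := by
        rw [Complex.sq_norm, Complex.normSq_apply, hz]
        simp [Complex.add_re, Complex.add_im]
        nlinarith [ht2]
      have hc0 : 0 ≤ c := hzsq ▸ sq_nonneg _
      have hc1 : c < 1 := by nlinarith [norm_nonneg z]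
      refine ⟨?_, hc1⟩
      rw [abs_lt]
      constructor <;> nlinarith [sq_nonneg (1 - c), sq_nonneg (1 + c)]
  · rintro ⟨hb, hc⟩ z heq
    rw [abs_lt] at hb
    set x := z.re with hx
    set y := z.im with hy
    have hre : x ^ 2 - y ^ 2 + b * x + c = 0 := by
      have := congrArg Complex.re heq
      simpa [pow_two, Complex.add_re, Complex.mul_re, Complex.mul_im, Complex.ofReal_re, Complex.ofReal_im] using this
    have him : y * (2 * x + b) = 0 := by
      have := congrArg Complex.im heq
      simp [pow_two, Complex.add_im, Complex.mul_re, Complex.mul_im, Complex.ofReal_re, Complex.ofReal_im] at this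
      linarith [this]
    have habs2 : (‖z‖) ^ 2 = x ^ 2 + y ^ 2 := by
      rw [Complex.sq_norm, Complex.normSq_apply]; ring
    rcases mul_eq_zero.mp him with hy0 | hxb
    · -- real root
      have hre' : x ^ 2 + b * x + c = 0 := by rw [hy0] at hre; linarith [hre]
      have hx1 : |x| < 1 := by
        rw [abs_lt]
        constructor
        · by_contra hcon
          push_neg at hcon
          nlinarith [mul_nonneg (by linarith : (0:ℝ) ≤ -x - 1) (by linarith : (0:ℝ) ≤ -x - c)]
        · by_contra hcon
          push_neg at hcon
          nlinarith [mul_nonneg (by linarith : (0:ℝ) ≤ x - 1) (by linarith : (0:ℝ) ≤ x - c)]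
      rw [abs_lt] at hx1
      nlinarith [norm_nonneg z, habs2, hy0]
    · have hx2 : x = -b / 2 := by linarith
      have hy2 : y ^ 2 = c - b ^ 2 / 4 := by rw [hx2] at hre; nlinarith [hre]
      nlinarith [norm_nonneg z, habs2]

/-- Jacobi extra-gradient on a bilinear game: the characteristic polynomial
`(λ − 1)² + (β₁ + β₂)σ²(λ − 1) + (α²σ² + β₁β₂σ⁴)` is Schur stable iff
`|(β₁ + β₂)σ² − 2| < 1 + (1 − β₁σ²)(1 − β₂σ²) + α²σ²` and
`(1 − β₁σ²)(1 − β₂σ²) + α²σ² < 1`. -/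
theorem jacobi_eg_schur (α β₁ β₂ σ : ℝ) (hσ : 0 < σ) :
    (∀ z : ℂ, (z - 1) ^ 2 + (((β₁ + β₂) * σ ^ 2 : ℝ) : ℂ) * (z - 1) +
          ((α ^ 2 * σ ^ 2 + β₁ * β₂ * σ ^ 4 : ℝ) : ℂ) = 0 → ‖z‖ < 1) ↔
      (|(β₁ + β₂) * σ ^ 2 - 2| < 1 + (1 - β₁ * σ ^ 2) * (1 - β₂ * σ ^ 2) + α ^ 2 * σ ^ 2 ∧
        (1 - β₁ * σ ^ 2) * (1 - β₂ * σ ^ 2) + α ^ 2 * σ ^ 2 < 1) := by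
  have key := schur_quadratic ((β₁ + β₂) * σ ^ 2 - 2)
    (1 - (β₁ + β₂) * σ ^ 2 + (α ^ 2 * σ ^ 2 + β₁ * β₂ * σ ^ 4))
  have heqv : ∀ z : ℂ,
      (z - 1) ^ 2 + (((β₁ + β₂) * σ ^ 2 : ℝ) : ℂ) * (z - 1) +
          ((α ^ 2 * σ ^ 2 + β₁ * β₂ * σ ^ 4 : ℝ) : ℂ)
        = z ^ 2 + (((β₁ + β₂) * σ ^ 2 - 2 : ℝ) : ℂ) * z +
          ((1 - (β₁ + β₂) * σ ^ 2 + (α ^ 2 * σ ^ 2 + β₁ * β₂ * σ ^ 4) : ℝ) : ℂ) := by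
    intro z; push_cast; ring
  have hceq : 1 - (β₁ + β₂) * σ ^ 2 + (α ^ 2 * σ ^ 2 + β₁ * β₂ * σ ^ 4)
      = (1 - β₁ * σ ^ 2) * (1 - β₂ * σ ^ 2) + α ^ 2 * σ ^ 2 := by ring
  rw [hceq] at key heqv
  rw [show (1:ℝ) + ((1 - β₁ * σ ^ 2) * (1 - β₂ * σ ^ 2) + α ^ 2 * σ ^ 2)
      = 1 + (1 - β₁ * σ ^ 2) * (1 - β₂ * σ ^ 2) + α ^ 2 * σ ^ 2 from by ring] at key
  rw [← key]
  exact forall_congr' fun z => by rw [heqv z]
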